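/- Every subgroup of a finite solvable group that is a Hall π-subgroup is pronormal in the group. -/

import Mathlib

open Pointwise

/-- `H` is pronormal in `G`: for every `g`, `H` and `H^g` are conjugate in `⟨H, H^g⟩`. -/
def Pronormal {G : Type*} [Group G] (H : Subgroup G) : Prop :=
  ∀ g : G, ∃ k ∈ (H ⊔ MulAut.conj g • H : Subgroup G),
    MulAut.conj k • H = MulAut.conj g • H


/-- `H` is a Hall `π`-subgroup. -/
def IsHallP {G : Type*} [Group G] (π : Set ℕ) (H : Subgroup G) : Prop :=
  (∀ p : ℕ, p.Prime → p ∣ Nat.card H → p ∈ π) ∧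
  (∀ p : ℕ, p.Prime → p ∣ H.index → p ∉ π)

private theorem coprime_of_pi {π : Set ℕ} {a b : ℕ} (ha : a ≠ 0)
    (h1 : ∀ p : ℕ, p.Prime → p ∣ a → p ∈ π) (h2 : ∀ p : ℕ, p.Prime → p ∣ b → p ∉ π) :
    Nat.Coprime a b := by
  by_contra h
  have hg1 : Nat.gcd a b ≠ 1 := h
  have hg0 : Nat.gcd a b ≠ 0 := fun h0 => ha (Nat.eq_zero_of_gcd_eq_zero_left h0)
  have hp : (Nat.gcd a b).minFac.Prime := Nat.minFac_prime hg1
  have hda : (Nat.gcd a b).minFac ∣ a := (Nat.minFac_dvd _).trans (Nat.gcd_dvd_left a b)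
  have hdb : (Nat.gcd a b).minFac ∣ b := (Nat.minFac_dvd _).trans (Nat.gcd_dvd_right a b)
  exact h2 _ hp hdb (h1 _ hp hda)

private theorem IsHallP.coprime {G : Type*} [Group G] [Finite G] {π : Set ℕ} {H : Subgroup G}
    (h : IsHallP π H) : Nat.Coprime (Nat.card H) H.index :=
  coprime_of_pi Nat.card_pos.ne' h.1 h.2

private theorem index_smul {G : Type*} [Group G] (a : MulAut G) (H : Subgroup G) :
    (a • H).index = H.index := by
  have hker : (MulDistribMulAction.toMonoidEnd (MulAut G) G a).ker = ⊥ :=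
    (MonoidHom.ker_eq_bot_iff _).mpr (MulDistribMulAction.toMulEquiv G a).injective
  have hrange : (MulDistribMulAction.toMonoidEnd (MulAut G) G a).range = ⊤ :=
    MonoidHom.range_eq_top_of_surjective _ (MulDistribMulAction.toMulEquiv G a).surjective
  have hsm : a • H = H.map (MulDistribMulAction.toMulEquiv G a).toMonoidHom := rfl
  rw [hsm]
  exact Subgroup.index_map_equiv (H := H) (MulDistribMulAction.toMulEquiv G a)

private theorem card_smul {G : Type*} [Group G] (a : MulAut G) (H : Subgroup G) :
    Nat.card (a • H : Subgroup G) = Nat.card H :=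
  (Nat.card_congr (Subgroup.equivSMul a H).toEquiv).symm

private theorem hall_smul {G : Type*} [Group G] {π : Set ℕ} {H : Subgroup G} (g : G)
    (h : IsHallP π H) : IsHallP π (MulAut.conj g • H) :=
  ⟨fun p pp hp => h.1 p pp (by rwa [card_smul] at hp),
   fun p pp hp => h.2 p pp (by rwa [index_smul] at hp)⟩

private theorem hall_map {G G' : Type*} [Group G] [Group G'] [Finite G] {f : G →* G'}
    (hf : Function.Surjective f) {π : Set ℕ} {H : Subgroup G} (h : IsHallP π H) :
    IsHallP π (H.map f) :=
  ⟨fun p pp hp => h.1 p pp (hp.trans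
      (Subgroup.card_dvd_of_surjective (f.subgroupMap H) (f.subgroupMap_surjective H))),
   fun p pp hp => h.2 p pp (hp.trans (H.index_map_dvd hf))⟩

private theorem hall_subgroupOf {G : Type*} [Group G] [Finite G] {π : Set ℕ} {H K : Subgroup G}
    (hle : H ≤ K) (h : IsHallP π H) : IsHallP π (H.subgroupOf K) :=
  ⟨fun p pp hp => h.1 p pp (by
      rwa [Nat.card_congr (Subgroup.subgroupOfEquivOfLe hle).toEquiv] at hp),
   fun p pp hp => h.2 p pp (hp.trans (Subgroup.relIndex_dvd_index_of_le hle))⟩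

private theorem map_conj_smul {G G' : Type*} [Group G] [Group G'] (f : G →* G') (g : G)
    (H : Subgroup G) : (MulAut.conj g • H).map f = MulAut.conj (f g) • H.map f := by
  show (H.map (MulAut.conj g).toMonoidHom).map f = (H.map f).map (MulAut.conj (f g)).toMonoidHom
  rw [Subgroup.map_map,
    Subgroup.map_map]
  congr 1
  ext x
  show f (MulAut.conj g • x) = MulAut.conj (f g) • f x
  simp [map_mul, map_inv]

open MulAction in
/-- Conjugacy of complements of an abelian normal Hall subgroup. -/
private theorem conj_complement {G : Type*} [Group G] [Finite G] (N : Subgroup G) [N.Normal]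
    [IsMulCommutative N] (hcop : Nat.Coprime (Nat.card N) N.index)
    {K₁ K₂ : Subgroup G} (hc1 : N.IsComplement' K₁) (hc2 : N.IsComplement' K₂) :
    ∃ x : G, MulAut.conj x • K₁ = K₂ := by
  haveI : N.FiniteIndex := ⟨N.index_ne_zero_of_finite⟩
  have key : ∀ (K : Subgroup G) (hc : N.IsComplement' K) (q : N.QuotientDiff),
      q = Quotient.mk'' ⟨(K : Set G), hc.symm⟩ → stabilizer G q = K := by
    intro K hc q hq
    have hle : K ≤ stabilizer G q := by
      intro k hk
      rw [mem_stabilizer_iff, hq]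
      have hset : (MulOpposite.op k⁻¹) •
          (⟨(K : Set G), hc.symm⟩ : N.LeftTransversal) =
          ⟨(K : Set G), hc.symm⟩ := by
        apply Subtype.ext
        show (MulOpposite.op k⁻¹) • (K : Set G) = K
        ext x
        constructor
        · rintro ⟨y, hy, rfl⟩
          exact K.mul_mem hy (K.inv_mem hk)
        · intro hx
          exact ⟨x * k, K.mul_mem hx hk, by
            show x * k * k⁻¹ = x
            group⟩
      show (Quotient.mk'' ((MulOpposite.op k⁻¹) •
          (⟨(K : Set G), hc.symm⟩ : N.LeftTransversal)) : N.QuotientDiff) =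
          Quotient.mk'' ⟨(K : Set G), hc.symm⟩
      rw [hset]
    have hstab : N.IsComplement' (stabilizer G q) :=
      Subgroup.isComplement'_stabilizer_of_coprime hcop
    have c1 := hc.card_mul
    have c2 := hstab.card_mul
    have hcards : Nat.card (stabilizer G q) = Nat.card K :=
      Nat.eq_of_mul_eq_mul_left Nat.card_pos (c2.trans c1.symm)
    exact (Subgroup.eq_of_le_of_card_ge hle hcards.le).symm
  let q₁ : N.QuotientDiff := Quotient.mk'' ⟨(K₁ : Set G), hc1.symm⟩
  let q₂ : N.QuotientDiff := Quotient.mk'' ⟨(K₂ : Set G), hc2.symm⟩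
  obtain ⟨h, hh⟩ := Subgroup.exists_smul_eq hcop q₁ q₂
  refine ⟨(h : G), ?_⟩
  have hh' : (h : G) • q₁ = q₂ := hh
  have hst : stabilizer G q₂ = MulAut.conj (h : G) • stabilizer G q₁ := by
    rw [← hh', stabilizer_smul_eq_stabilizer_map_conj]
    rfl
  rw [← key K₁ hc1 q₁ rfl, ← hst, key K₂ hc2 q₂ rfl]

universe u

private theorem hall_conj : ∀ (n : ℕ) (G : Type u) [Group G] [Finite G] [Group.IsSolvable G],
    Nat.card G ≤ n → ∀ (π : Set ℕ) (H K : Subgroup G), IsHallP π H → IsHallP π K →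
    ∃ g : G, MulAut.conj g • H = K := by
  intro n
  induction n with
  | zero =>
    intro G _ _ _ hle
    exact absurd (Nat.le_zero.mp hle) Nat.card_pos.ne'
  | succ n IH =>
    intro G _ _ _ hcard π H K hH hK
    classical
    by_cases htriv : Nat.card G = 1
    · have hsub : Subsingleton G := (Nat.card_eq_one_iff_unique.mp htriv).1
      refine ⟨1, ?_⟩
      have : H = K := by
        ext x
        simp [Subsingleton.elim x 1, Subgroup.one_mem]
      rw [map_one, one_smul, this]
    -- find abelian normal nontrivial N
    have hnt : Nontrivial G := Finite.one_lt_card_iff_nontrivial.mp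
      (lt_of_le_of_ne (Nat.one_le_iff_ne_zero.mpr Nat.card_pos.ne') (Ne.symm htriv))
    obtain ⟨m, hm⟩ := (inferInstance : Group.IsSolvable G).solvable
    have hex : ∃ k, derivedSeries G k = ⊥ := ⟨m, hm⟩
    have hfindpos : Nat.find hex ≠ 0 := by
      intro h0
      have hsp := Nat.find_spec hex
      rw [h0, derivedSeries_zero] at hsp
      obtain ⟨x, y, hxy⟩ := hnt
      apply hxy
      have hx : x ∈ (⊥ : Subgroup G) := hsp ▸ Subgroup.mem_top x
      have hy : y ∈ (⊥ : Subgroup G) := hsp ▸ Subgroup.mem_top y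
      rw [Subgroup.mem_bot.mp hx, Subgroup.mem_bot.mp hy]
    set m' := Nat.find hex - 1 with hm'
    set N := derivedSeries G m' with hN
    have hNbot : N ≠ ⊥ := Nat.find_min hex (by omega)
    have hNcomm : ⁅N, N⁆ = ⊥ := by
      have hsp := Nat.find_spec hex
      rwa [show Nat.find hex = m' + 1 by omega, derivedSeries_succ] at hsp
    haveI hNnormal : N.Normal := derivedSeries_normal G m'
    haveI hNcommut : IsMulCommutative N :=
      Subgroup.le_centralizer_iff_isMulCommutative.mp
        (Subgroup.commutator_eq_bot_iff_le_centralizer.mp hNcomm)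
    -- quotient step
    set f := QuotientGroup.mk' N with hf
    have hfs : Function.Surjective f := QuotientGroup.mk'_surjective N
    have hQcard : Nat.card (G ⧸ N) < Nat.card G := by
      have h2 : 1 < Nat.card N := by rw [Subgroup.one_lt_card_iff_ne_bot]; exact hNbot
      have h3 := Subgroup.card_eq_card_quotient_mul_card_subgroup N
      have h4 : 0 < Nat.card (G ⧸ N) := Nat.card_pos
      calc Nat.card (G ⧸ N) < Nat.card (G ⧸ N) * Nat.card N := by
            exact (Nat.lt_mul_iff_one_lt_right h4).mpr h2
        _ = Nat.card G := h3.symm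
    obtain ⟨gq, hgq⟩ := IH (G ⧸ N) (by omega) π (H.map f) (K.map f)
      (hall_map hfs hH) (hall_map hfs hK)
    obtain ⟨g₁, rfl⟩ := hfs gq
    set H₁ := MulAut.conj g₁ • H with hH₁
    have hH₁hall : IsHallP π H₁ := hall_smul g₁ hH
    have hmap : H₁.map f = K.map f := by
      rw [hH₁, map_conj_smul]
      exact hgq
    have hsup : H₁ ⊔ N = K ⊔ N := by
      have hc := congrArg (Subgroup.comap f) hmap
      rwa [Subgroup.comap_map_eq, Subgroup.comap_map_eq, hf, QuotientGroup.ker_mk'] at hc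
    have comb : ∀ x : G, MulAut.conj x • H₁ = K → ∃ g : G, MulAut.conj g • H = K := by
      intro x hx
      exact ⟨x * g₁, by rw [map_mul, mul_smul, ← hH₁, hx]⟩
    by_cases hM : K ⊔ N = ⊤
    · -- case A : H₁ N = K N = G
      have hH₁N : H₁ ⊔ N = ⊤ := hsup.trans hM
      -- normality of L ⊓ N for L ⊔ N = ⊤
      have norm_inf : ∀ L : Subgroup G, L ⊔ N = ⊤ → (L ⊓ N).Normal := by
        intro L hL
        constructor
        intro x hx g
        have hg : g ∈ ((L ⊔ N : Subgroup G) : Set G) := by rw [hL]; trivial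
        rw [Subgroup.mul_normal] at hg
        obtain ⟨l, hl, y, hy, rfl⟩ := hg
        have hyx : y * x * y⁻¹ = x := by
          rw [Subgroup.mul_comm_of_mem_isMulCommutative N hy hx.2]
          group
        have : l * y * x * (l * y)⁻¹ = l * (y * x * y⁻¹) * l⁻¹ := by group
        rw [this, hyx]
        exact ⟨L.mul_mem (L.mul_mem hl hx.1) (L.inv_mem hl), hNnormal.conj_mem x hx.2 l⟩
      -- relindex computation
      have rel : ∀ L : Subgroup G, L ⊔ N = ⊤ → ((L ⊓ N).subgroupOf N).index = L.index := by
        intro L hL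
        have e : (N.subgroupOf L).index = (N.subgroupOf (L ⊔ N)).index := by
          rw [Subgroup.index_eq_card, Subgroup.index_eq_card]
          exact Nat.card_congr (QuotientGroup.quotientInfEquivProdNormalQuotient L N).toEquiv
        have e2 : (N.subgroupOf L).index = N.index := by
          rw [e]
          have h7 : (N.subgroupOf (L ⊔ N)).index = N.relIndex (L ⊔ N) := rfl
          rw [h7, hL, Subgroup.relIndex_top_right]
        -- cards
        have a1 : Nat.card (L ⊓ N : Subgroup G) * ((L ⊓ N).subgroupOf N).index = Nat.card N := by
          have := Subgroup.card_mul_index ((L ⊓ N).subgroupOf N)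
          rwa [Nat.card_congr (Subgroup.subgroupOfEquivOfLe inf_le_right).toEquiv] at this
        have b1 : Nat.card (L ⊓ N : Subgroup G) * N.index = Nat.card L := by
          have := Subgroup.card_mul_index (N.subgroupOf L)
          rw [e2] at this
          rwa [show N.subgroupOf L = (N ⊓ L).subgroupOf L from (Subgroup.inf_subgroupOf_right N L).symm,
            Nat.card_congr (Subgroup.subgroupOfEquivOfLe inf_le_right).toEquiv,
            inf_comm] at this
        have c1 : Nat.card L * L.index = Nat.card G := Subgroup.card_mul_index L
        have d1 : Nat.card N * N.index = Nat.card G := Subgroup.card_mul_index N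
        have hNi : N.index ≠ 0 := N.index_ne_zero_of_finite
        have hLNpos : 0 < Nat.card (L ⊓ N : Subgroup G) := Nat.card_pos
        have key2 : Nat.card (L ⊓ N : Subgroup G) * L.index = Nat.card N := by
          have h5 : Nat.card (L ⊓ N : Subgroup G) * N.index * L.index = Nat.card N * N.index := by
            rw [b1, c1, d1]
          have h6 : Nat.card (L ⊓ N : Subgroup G) * L.index * N.index = Nat.card N * N.index := by
            rw [← h5]; ring
          exact Nat.eq_of_mul_eq_mul_right (Nat.pos_of_ne_zero hNi) h6
        have := a1.trans key2.symm
        exact Nat.eq_of_mul_eq_mul_left hLNpos this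
      -- inclusion of intersections
      have incl : ∀ L L' : Subgroup G, IsHallP π L → IsHallP π L' →
          L ⊔ N = ⊤ → L' ⊔ N = ⊤ → L ⊓ N ≤ L' ⊓ N := by
        intro L L' hL hL' hLsup hL'sup
        haveI : (L' ⊓ N).Normal := norm_inf L' hL'sup
        intro x hx
        set mk2 := QuotientGroup.mk' (L' ⊓ N) with hmk2
        have h1 : orderOf (mk2 x) ∣ Nat.card L :=
          (orderOf_map_dvd mk2 x).trans (Subgroup.orderOf_dvd_natCard L hx.1)
        have h2 : orderOf (mk2 x) ∣ L'.index := by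
          set f₂ : N →* G ⧸ (L' ⊓ N) := mk2.comp N.subtype with hf₂
          have hx2 : mk2 x = f₂ ⟨x, hx.2⟩ := rfl
          have hker : f₂.ker = (L' ⊓ N).subgroupOf N := by
            rw [hf₂, ← MonoidHom.comap_ker, hmk2, QuotientGroup.ker_mk']
            rfl
          have hrange : Nat.card f₂.range = L'.index := by
            rw [← rel L' hL'sup, ← hker, Subgroup.index_eq_card]
            exact (Nat.card_congr (QuotientGroup.quotientKerEquivRange f₂).toEquiv).symm
          rw [hx2, ← hrange]
          exact Subgroup.orderOf_dvd_natCard f₂.range ⟨⟨x, hx.2⟩, rfl⟩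
        have hcop : Nat.Coprime (Nat.card L) L'.index :=
          coprime_of_pi Nat.card_pos.ne' hL.1 hL'.2
        have : orderOf (mk2 x) = 1 := Nat.dvd_one.mp (hcop ▸ Nat.dvd_gcd h1 h2)
        have hx1 : mk2 x = 1 := orderOf_eq_one_iff.mp this
        have : x ∈ L' ⊓ N := by
          rwa [← QuotientGroup.ker_mk' (L' ⊓ N), MonoidHom.mem_ker]
        exact this
      have hinf : H₁ ⊓ N = K ⊓ N :=
        le_antisymm (incl H₁ K hH₁hall hK hH₁N hM) (incl K H₁ hK hH₁hall hM hH₁N)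
      by_cases hbot : H₁ ⊓ N = ⊥
      · -- Schur-Zassenhaus case
        have hKbot : K ⊓ N = ⊥ := hinf ▸ hbot
        have compl : ∀ L : Subgroup G, L ⊓ N = ⊥ → L ⊔ N = ⊤ → N.IsComplement' L := by
          intro L hLb hLs
          apply Subgroup.isComplement'_of_disjoint_and_mul_eq_univ
          · rw [disjoint_iff, inf_comm, hLb]
          · have : ((N ⊔ L : Subgroup G) : Set G) = Set.univ := by
              rw [sup_comm, hLs, Subgroup.coe_top]
            rw [Subgroup.normal_mul] at this
            exact this
        have hcN : N.IsComplement' K := compl K hKbot hM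
        have hcH : N.IsComplement' H₁ := compl H₁ hbot hH₁N
        -- coprimality of card N and N.index
        have hcardN : Nat.card N = K.index := by
          have := rel K hM
          rwa [hKbot, Subgroup.bot_subgroupOf, Subgroup.index_bot] at this
        have hindexN : N.index = Nat.card K := by
          have d1 : Nat.card N * N.index = Nat.card G := Subgroup.card_mul_index N
          have c1 : Nat.card K * K.index = Nat.card G := Subgroup.card_mul_index K
          have : Nat.card N * N.index = Nat.card N * Nat.card K := by
            rw [d1, hcardN, ← c1]; ring
          exact Nat.eq_of_mul_eq_mul_left Nat.card_pos this
        have hcop : Nat.Coprime (Nat.card N) N.index := by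
          rw [hcardN, hindexN]
          exact (coprime_of_pi Nat.card_pos.ne' hK.1 hK.2).symm
        obtain ⟨x, hx⟩ := conj_complement N hcop hcH hcN
        exact comb x hx
      · -- quotient by N₀ = H₁ ⊓ N
        set N₀ := H₁ ⊓ N with hN₀
        haveI : N₀.Normal := norm_inf H₁ hH₁N
        set f₂ := QuotientGroup.mk' N₀ with hf₂
        have hf₂s : Function.Surjective f₂ := QuotientGroup.mk'_surjective N₀
        have hQ₂ : Nat.card (G ⧸ N₀) < Nat.card G := by
          have h2 : 1 < Nat.card N₀ := by rw [Subgroup.one_lt_card_iff_ne_bot]; exact hbot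
          have h3 := Subgroup.card_eq_card_quotient_mul_card_subgroup N₀
          have h4 : 0 < Nat.card (G ⧸ N₀) := Nat.card_pos
          calc Nat.card (G ⧸ N₀) < Nat.card (G ⧸ N₀) * Nat.card N₀ :=
                (Nat.lt_mul_iff_one_lt_right h4).mpr h2
            _ = Nat.card G := h3.symm
        obtain ⟨gq₂, hgq₂⟩ := IH (G ⧸ N₀) (by omega) π (H₁.map f₂) (K.map f₂)
          (hall_map hf₂s hH₁hall) (hall_map hf₂s hK)
        obtain ⟨g₂, rfl⟩ := hf₂s gq₂
        have hmap₂ : (MulAut.conj g₂ • H₁).map f₂ = K.map f₂ := by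
          rw [map_conj_smul]; exact hgq₂
        have hsup₂ : (MulAut.conj g₂ • H₁) ⊔ N₀ = K ⊔ N₀ := by
          have hc := congrArg (Subgroup.comap f₂) hmap₂
          rwa [Subgroup.comap_map_eq, Subgroup.comap_map_eq, hf₂, QuotientGroup.ker_mk'] at hc
        have hKsup : K ⊔ N₀ = K := sup_eq_left.mpr (hinf.le.trans inf_le_left)
        have hH₁sup : (MulAut.conj g₂ • H₁) ⊔ N₀ = MulAut.conj g₂ • H₁ := by
          apply sup_eq_left.mpr
          have : MulAut.conj g₂ • N₀ ≤ MulAut.conj g₂ • H₁ :=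
            Subgroup.pointwise_smul_le_pointwise_smul_iff.mpr inf_le_left
          rwa [Subgroup.Normal.conj_smul_eq_self] at this
        exact comb g₂ (by rw [← hH₁sup, hsup₂, hKsup])
    · -- case B : M := K ⊔ N proper
      set M := K ⊔ N with hMdef
      have hKM : K ≤ M := le_sup_left
      have hH₁M : H₁ ≤ M := hsup ▸ le_sup_left
      have hMcard : Nat.card M < Nat.card G := by
        refine lt_of_le_of_ne (Nat.le_of_dvd Nat.card_pos M.card_subgroup_dvd_card) ?_
        intro h
        exact hM (Subgroup.eq_top_of_card_eq M h)
      obtain ⟨mm, hmm⟩ := IH M (by omega) π (H₁.subgroupOf M) (K.subgroupOf M)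
        (hall_subgroupOf hH₁M hH₁hall) (hall_subgroupOf hKM hK)
      rw [Subgroup.conj_smul_subgroupOf hH₁M mm] at hmm
      have := congrArg (Subgroup.map M.subtype) hmm
      rw [Subgroup.subgroupOf_map_subtype, Subgroup.subgroupOf_map_subtype,
        inf_eq_left.mpr (Subgroup.conj_smul_le_of_le hH₁M mm),
        inf_eq_left.mpr hKM] at this
      exact comb mm this

theorem pronormal_of_hall_of_solvable
    {G : Type*} [Group G] [Finite G] [Group.IsSolvable G] (H : Subgroup G) (π : Set ℕ)
    (h1 : ∀ p : ℕ, p.Prime → p ∣ Nat.card H → p ∈ π)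
    (h2 : ∀ p : ℕ, p.Prime → p ∣ H.index → p ∉ π) :
    Pronormal H := by
  intro g
  set K := H ⊔ MulAut.conj g • H with hKdef
  have hHK : H ≤ K := le_sup_left
  have hgK : MulAut.conj g • H ≤ K := le_sup_right
  have hhall : IsHallP π H := ⟨h1, h2⟩
  obtain ⟨k, hk⟩ := hall_conj (Nat.card K) K le_rfl π (H.subgroupOf K)
    ((MulAut.conj g • H).subgroupOf K)
    (hall_subgroupOf hHK hhall) (hall_subgroupOf hgK (hall_smul g hhall))
  refine ⟨(k : G), k.2, ?_⟩
  rw [Subgroup.conj_smul_subgroupOf hHK k] at hk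
  have := congrArg (Subgroup.map K.subtype) hk
  rwa [Subgroup.subgroupOf_map_subtype, Subgroup.subgroupOf_map_subtype,
    inf_eq_left.mpr (Subgroup.conj_smul_le_of_le hHK k),
    inf_eq_left.mpr hgK] at this
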